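/- For the Cantor-set stack encoding, if v = Σ_{i=1}^t a_i/4^i with a_i ∈ {1,3} and t ≥ 1, then σ(4v − 2) equals 1 if a_1 = 3 and 0 if a_1 = 1, where σ is the saturated linear sigmoid. -/

import Mathlib

/-- The saturated linear sigmoid. -/
def satSig (x : ℚ) : ℚ := min (max x 0) 1

/-- Cantor-set encoding of a stack of base-4 digits (top of stack first). -/
def stackEnc : List ℚ → ℚ
  | [] => 0
  | a :: s => a / 4 + stackEnc s / 4

lemma stackEnc_bounds (s : List ℚ) (h : ∀ x ∈ s, x = 1 ∨ x = 3) :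
    0 ≤ stackEnc s ∧ stackEnc s < 1 := by
  induction s with
  | nil => simp [stackEnc]
  | cons a t ih =>
    obtain ⟨h0, h1⟩ := ih (fun x hx => h x (List.mem_cons_of_mem _ hx))
    rcases h a List.mem_cons_self with ha | ha <;>
      simp only [stackEnc, ha] <;> constructor <;> linarith

theorem top_stackEnc (a : ℚ) (s : List ℚ)
    (hdig : ∀ x ∈ a :: s, x = 1 ∨ x = 3) :
    satSig (4 * stackEnc (a :: s) - 2) = if a = 3 then 1 else 0 := by
  obtain ⟨h0, h1⟩ := stackEnc_bounds s (fun x hx => hdig x (List.mem_cons_of_mem _ hx))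
  rcases hdig a List.mem_cons_self with ha | ha
  · subst ha
    simp only [stackEnc, satSig]
    rw [max_eq_right (by linarith), min_eq_left (by norm_num), if_neg (by norm_num)]
  · subst ha
    simp only [stackEnc, satSig]
    rw [max_eq_left (by linarith), min_eq_right (by linarith)]
    simp
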